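/- Under the setting of the Nesterov accelerated iteration (xᵗ minimizing f(x) + ½‖x − yᵗ‖²_S, with α₀ = 0, α₁ = 1, α_{t+1} = (1+√(1+4α_t²))/2 and the momentum update for y^{t+1}), for all t ≥ 1: 0 ≤ f(xᵗ) − f* ≤ 2‖x⁰ − x*‖²_S/(t+1)². -/

import Mathlib

open Matrix

lemma sym_dot {n : ℕ} (S : Matrix (Fin n) (Fin n) ℝ) (hS : Sᵀ = S)
    (u v : Fin n → ℝ) : u ⬝ᵥ S *ᵥ v = v ⬝ᵥ S *ᵥ u := by
  rw [Matrix.dotProduct_mulVec, ← Matrix.mulVec_transpose, hS, dotProduct_comm]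

lemma quad_expand {n : ℕ} (Q : Matrix (Fin n) (Fin n) ℝ) (hQ : Qᵀ = Q) (b : Fin n → ℝ)
    (f : (Fin n → ℝ) → ℝ) (hf : ∀ x, f x = (1 / 2) * (x ⬝ᵥ Q *ᵥ x) - b ⬝ᵥ x)
    (u v : Fin n → ℝ) :
    f v = f u + (Q *ᵥ u - b) ⬝ᵥ (v - u) + (1 / 2) * ((v - u) ⬝ᵥ Q *ᵥ (v - u)) := by
  simp only [hf, Matrix.mulVec_sub, dotProduct_sub, sub_dotProduct]
  rw [dotProduct_comm (Q *ᵥ u) v, dotProduct_comm (Q *ᵥ u) u,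
    sym_dot Q hQ u v]
  ring

lemma cross_id {n : ℕ} (S : Matrix (Fin n) (Fin n) ℝ) (hS : Sᵀ = S)
    (x y z : Fin n → ℝ) :
    (S *ᵥ (y - x)) ⬝ᵥ (z - x) =
      (1/2) * ((z - x) ⬝ᵥ S *ᵥ (z - x)) + (1/2) * ((x - y) ⬝ᵥ S *ᵥ (x - y))
        - (1/2) * ((z - y) ⬝ᵥ S *ᵥ (z - y)) := by
  rw [dotProduct_comm]
  simp only [Matrix.mulVec_sub, dotProduct_sub, sub_dotProduct]
  rw [sym_dot S hS x z, sym_dot S hS y z, sym_dot S hS y x]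
  ring

lemma bilin_identity {n : ℕ} (S : Matrix (Fin n) (Fin n) ℝ) (hS : Sᵀ = S)
    (l : ℝ) (a c u : Fin n → ℝ) :
    (l + 1) * (l * ((a - u) ⬝ᵥ S *ᵥ (a - u)) + (c - u) ⬝ᵥ S *ᵥ (c - u)) =
      ((l + 1) • u - l • a - c) ⬝ᵥ S *ᵥ ((l + 1) • u - l • a - c)
        + l * ((a - c) ⬝ᵥ S *ᵥ (a - c)) := by
  simp only [Matrix.mulVec_sub, Matrix.mulVec_add, Matrix.mulVec_smul, dotProduct_sub,
    dotProduct_add, sub_dotProduct, add_dotProduct, dotProduct_smul, smul_dotProduct,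
    smul_eq_mul]
  rw [sym_dot S hS u a, sym_dot S hS u c, sym_dot S hS c a]
  ring

theorem nesterov_convergence_rate {n : ℕ}
    (Q S : Matrix (Fin n) (Fin n) ℝ) (b : Fin n → ℝ)
    (hQ : Q.PosSemidef) (hS : S.PosSemidef) (hb : ∃ z, Q *ᵥ z = b)
    (f : (Fin n → ℝ) → ℝ)
    (hf : ∀ x, f x = (1 / 2) * (x ⬝ᵥ Q *ᵥ x) - b ⬝ᵥ x)
    (xstar : Fin n → ℝ) (hmin : ∀ z, f xstar ≤ f z)
    (x y : ℕ → (Fin n → ℝ)) (α : ℕ → ℝ)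
    (hα0 : α 0 = 0) (hα1 : α 1 = 1)
    (hαrec : ∀ t, 1 ≤ t → α (t + 1) = (1 + Real.sqrt (1 + 4 * (α t) ^ 2)) / 2)
    (hx0 : x 0 = y 1)
    (hopt : ∀ t, 1 ≤ t → Q *ᵥ x t - b + S *ᵥ (x t - y t) = 0)
    (hy : ∀ t, 1 ≤ t →
      y (t + 1) = (1 + (α t - 1) / α (t + 1)) • x t - ((α t - 1) / α (t + 1)) • x (t - 1)) :
    ∀ t, 1 ≤ t →
      0 ≤ f (x t) - f xstar ∧
      f (x t) - f xstar ≤ 2 * ((x 0 - xstar) ⬝ᵥ S *ᵥ (x 0 - xstar)) / ((t : ℝ) + 1) ^ 2 := by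
  have hQs : Qᵀ = Q := (by simpa using hQ.isHermitian : Q.IsSymm).eq
  have hSs : Sᵀ = S := (by simpa using hS.isHermitian : S.IsSymm).eq
  have hSnn : ∀ v : Fin n → ℝ, 0 ≤ v ⬝ᵥ S *ᵥ v := fun v => by simpa using hS.dotProduct_mulVec_nonneg v
  have hQnn : ∀ v : Fin n → ℝ, 0 ≤ v ⬝ᵥ Q *ᵥ v := fun v => by simpa using hQ.dotProduct_mulVec_nonneg v
  -- the key per-step inequality
  have key : ∀ t, 1 ≤ t → ∀ z, f (x t) - f z ≤
      (1/2) * ((z - y t) ⬝ᵥ S *ᵥ (z - y t)) - (1/2) * ((z - x t) ⬝ᵥ S *ᵥ (z - x t)) := by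
    intro t ht z
    have hgrad : Q *ᵥ x t - b = S *ᵥ (y t - x t) := by
      have h := hopt t ht
      have h2 : Q *ᵥ x t - b = -(S *ᵥ (x t - y t)) := by
        rw [eq_neg_iff_add_eq_zero]; exact h
      rw [h2, ← Matrix.mulVec_neg, neg_sub]
    have hexp := quad_expand Q hQs b f hf (x t) z
    rw [hgrad, cross_id S hSs (x t) (y t) z] at hexp
    have h1 := hQnn (z - x t)
    have h2 := hSnn (x t - y t)
    linarith
  -- growth of α
  have hαge : ∀ t : ℕ, 1 ≤ t → ((t : ℝ) + 1) / 2 ≤ α t := by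
    intro t ht
    induction t with
    | zero => omega
    | succ s ih =>
      rcases Nat.lt_or_ge s 1 with hs | hs
      · interval_cases s
        · rw [hα1]; norm_num
      · have ihs := ih hs
        have ha : 0 ≤ α s := by
          have : (1:ℝ) ≤ (s:ℝ) := by exact_mod_cast hs
          linarith
        have hsqrt : 2 * α s ≤ Real.sqrt (1 + 4 * α s ^ 2) := by
          have h2 : (2 * α s) ^ 2 ≤ 1 + 4 * α s ^ 2 := by nlinarith
          calc 2 * α s = Real.sqrt ((2 * α s) ^ 2) := (Real.sqrt_sq (by positivity)).symm
            _ ≤ Real.sqrt (1 + 4 * α s ^ 2) := Real.sqrt_le_sqrt h2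
        rw [hαrec s hs]
        push_cast
        push_cast at ihs
        linarith
  have hαpos : ∀ t, 1 ≤ t → 0 < α t := by
    intro t ht
    have h1 := hαge t ht
    have : (1:ℝ) ≤ (t:ℝ) := by exact_mod_cast ht
    linarith
  have hα1le : ∀ t, 1 ≤ t → 1 ≤ α t := by
    intro t ht
    have h1 := hαge t ht
    have : (1:ℝ) ≤ (t:ℝ) := by exact_mod_cast ht
    linarith
  have hsq : ∀ t, 1 ≤ t → α t ^ 2 - α t = α (t - 1) ^ 2 := by
    intro t ht
    match t, ht with
    | 1, _ => simp [hα1, hα0]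
    | (s+2), _ =>
      have hs1 : 1 ≤ s + 1 := by omega
      have hr := hαrec (s+1) hs1
      have hnn : (0:ℝ) ≤ 1 + 4 * α (s+1) ^ 2 := by positivity
      have hsq2 : Real.sqrt (1 + 4 * α (s+1) ^ 2) ^ 2 = 1 + 4 * α (s+1) ^ 2 :=
        Real.sq_sqrt hnn
      show α (s+2) ^ 2 - α (s+2) = α (s+1) ^ 2
      rw [hr]; nlinarith [hsq2]
  -- the sequence w
  set w : ℕ → (Fin n → ℝ) := fun t => α t • x t - (α t - 1) • x (t-1) - xstar with hw_def
  have hw0 : w 0 = x 0 - xstar := by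
    show α 0 • x 0 - (α 0 - 1) • x (0-1) - xstar = x 0 - xstar
    rw [hα0]
    show (0:ℝ) • x 0 - ((0:ℝ) - 1) • x 0 - xstar = x 0 - xstar
    module
  have hwy : ∀ t, 1 ≤ t → α t • y t - (α t - 1) • x (t-1) - xstar = w (t-1) := by
    intro t ht
    match t, ht with
    | 1, _ =>
      rw [hα1, ← hx0, hw0]
      show (1:ℝ) • x 0 - ((1:ℝ) - 1) • x (1-1) - xstar = x 0 - xstar
      module
    | (s+2), _ =>
      have hs1 : 1 ≤ s + 1 := by omega
      have hyy : y (s+2) = (1 + (α (s+1) - 1) / α (s+2)) • x (s+1)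
          - ((α (s+1) - 1) / α (s+2)) • x s := hy (s+1) hs1
      have hA : α (s+2) ≠ 0 := ne_of_gt (hαpos _ (by omega))
      show α (s+2) • y (s+2) - (α (s+2) - 1) • x (s+1) - xstar
          = α (s+1) • x (s+1) - (α (s+1) - 1) • x s - xstar
      rw [hyy]
      have hc1 : α (s+2) • (((α (s+1) - 1) / α (s+2)) • x s)
          = (α (s+1) - 1) • x s := by
        rw [smul_smul, mul_div_cancel₀ _ hA]
      have hc2 : α (s+2) • ((1 + (α (s+1) - 1) / α (s+2)) • x (s+1))
          = (α (s+2) + (α (s+1) - 1)) • x (s+1) := by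
        rw [smul_smul, mul_add, mul_one, mul_div_cancel₀ _ hA]
      rw [smul_sub, hc1, hc2]
      module
  -- one-step descent of the Lyapunov function
  have descent : ∀ t, 1 ≤ t →
      α t ^ 2 * (f (x t) - f xstar) + (1/2) * (w t ⬝ᵥ S *ᵥ w t) ≤
      α (t-1) ^ 2 * (f (x (t-1)) - f xstar) + (1/2) * (w (t-1) ⬝ᵥ S *ᵥ w (t-1)) := by
    intro t ht
    have h1 := key t ht (x (t-1))
    have h2 := key t ht xstar
    have hsqt := hsq t ht
    have h1a := hα1le t ht
    have hap := hαpos t ht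
    have id1 := bilin_identity S hSs (α t - 1) (x (t-1)) xstar (y t)
    have id2 := bilin_identity S hSs (α t - 1) (x (t-1)) xstar (x t)
    rw [sub_add_cancel] at id1 id2
    rw [hwy t ht] at id1
    have hwt : w t = α t • x t - (α t - 1) • x (t-1) - xstar := rfl
    rw [← hwt] at id2
    have m1 := mul_le_mul_of_nonneg_left h1
      (by nlinarith : (0:ℝ) ≤ α t * (α t - 1))
    have m2 := mul_le_mul_of_nonneg_left h2 (le_of_lt hap)
    rw [← hsqt]
    nlinarith [m1, m2, id1, id2]
  -- Lyapunov bound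
  have Emono : ∀ t, α t ^ 2 * (f (x t) - f xstar) + (1/2) * (w t ⬝ᵥ S *ᵥ w t) ≤
      (1/2) * ((x 0 - xstar) ⬝ᵥ S *ᵥ (x 0 - xstar)) := by
    intro t
    induction t with
    | zero => rw [hα0, hw0]; norm_num
    | succ s ih =>
      have hd := descent (s+1) (by omega)
      simp only [Nat.add_sub_cancel] at hd
      exact le_trans hd ih
  -- conclusion
  intro t ht
  have hD : 0 ≤ f (x t) - f xstar := by linarith [hmin (x t)]
  refine ⟨hD, ?_⟩
  have hE := Emono t
  have hWnn := hSnn (w t)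
  have hge := hαge t ht
  have htpos : (0:ℝ) < (t : ℝ) + 1 := by positivity
  have ha2 : ((t:ℝ) + 1) ^ 2 / 4 ≤ α t ^ 2 := by nlinarith
  have hkey : ((t:ℝ) + 1) ^ 2 / 4 * (f (x t) - f xstar) ≤
      (1/2) * ((x 0 - xstar) ⬝ᵥ S *ᵥ (x 0 - xstar)) := by
    calc ((t:ℝ) + 1) ^ 2 / 4 * (f (x t) - f xstar)
        ≤ α t ^ 2 * (f (x t) - f xstar) := mul_le_mul_of_nonneg_right ha2 hD
      _ ≤ (1/2) * ((x 0 - xstar) ⬝ᵥ S *ᵥ (x 0 - xstar)) := by linarith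
  rw [le_div_iff₀ (by positivity : (0:ℝ) < ((t:ℝ)+1)^2)]
  nlinarith [hkey, hD, htpos]
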